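/- For every pair (x, y) of unit quaternions, the map z ↦ x * z * conj(y) is a linear isometric automorphism of ℍ regarded as a 4-dimensional real inner product space; the resulting map η₀ from the direct product of two copies of the group of unit quaternions to the group of linear isometric automorphisms of ℍ is a group homomorphism, its kernel is exactly {(1,1), (−1,−1)}, and its range is exactly the set of linear isometric automorphisms of ℍ with determinant 1; consequently η₀ induces a group isomorphism from (Sp(1) × Sp(1))/{±(1,1)} onto SO(ℍ) ≅ SO(4). -/

import Mathlib

noncomputable section

open Quaternion

lemma negOne_negOne_mem_unitary :
    ((-1 : ℍ[ℝ]) ∈ unitary ℍ[ℝ]) := by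
  rw [Unitary.mem_iff]
  constructor <;> simp

lemma det_fin_four (A : Matrix (Fin 4) (Fin 4) ℝ) : A.det =
    A 0 0 * A 1 1 * A 2 2 * A 3 3 - A 0 0 * A 1 1 * A 2 3 * A 3 2 -
    A 0 0 * A 1 2 * A 2 1 * A 3 3 + A 0 0 * A 1 2 * A 2 3 * A 3 1 +
    A 0 0 * A 1 3 * A 2 1 * A 3 2 - A 0 0 * A 1 3 * A 2 2 * A 3 1 -
    A 0 1 * A 1 0 * A 2 2 * A 3 3 + A 0 1 * A 1 0 * A 2 3 * A 3 2 +
    A 0 1 * A 1 2 * A 2 0 * A 3 3 - A 0 1 * A 1 2 * A 2 3 * A 3 0 -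
    A 0 1 * A 1 3 * A 2 0 * A 3 2 + A 0 1 * A 1 3 * A 2 2 * A 3 0 +
    A 0 2 * A 1 0 * A 2 1 * A 3 3 - A 0 2 * A 1 0 * A 2 3 * A 3 1 -
    A 0 2 * A 1 1 * A 2 0 * A 3 3 + A 0 2 * A 1 1 * A 2 3 * A 3 0 +
    A 0 2 * A 1 3 * A 2 0 * A 3 1 - A 0 2 * A 1 3 * A 2 1 * A 3 0 -
    A 0 3 * A 1 0 * A 2 1 * A 3 2 + A 0 3 * A 1 0 * A 2 2 * A 3 1 +
    A 0 3 * A 1 1 * A 2 0 * A 3 2 - A 0 3 * A 1 1 * A 2 2 * A 3 0 -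
    A 0 3 * A 1 2 * A 2 0 * A 3 1 + A 0 3 * A 1 2 * A 2 1 * A 3 0 := by
  rw [Matrix.det_succ_row_zero]
  simp [Fin.sum_univ_succ, Matrix.det_fin_three, Matrix.submatrix_apply, Fin.succAbove]
  ring

local notation "B" => (QuaternionAlgebra.basisOneIJK (-1 : ℝ) (0 : ℝ) (-1 : ℝ) : Module.Basis (Fin 4) ℝ ℍ[ℝ])

def qi : ℍ[ℝ] := ⟨0,1,0,0⟩
def qj : ℍ[ℝ] := ⟨0,0,1,0⟩
def qk : ℍ[ℝ] := ⟨0,0,0,1⟩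
@[simp] lemma qi_re : qi.re = 0 := rfl
@[simp] lemma qi_imI : qi.imI = 1 := rfl
@[simp] lemma qi_imJ : qi.imJ = 0 := rfl
@[simp] lemma qi_imK : qi.imK = 0 := rfl
@[simp] lemma qj_re : qj.re = 0 := rfl
@[simp] lemma qj_imI : qj.imI = 0 := rfl
@[simp] lemma qj_imJ : qj.imJ = 1 := rfl
@[simp] lemma qj_imK : qj.imK = 0 := rfl
@[simp] lemma qk_re : qk.re = 0 := rfl
@[simp] lemma qk_imI : qk.imI = 0 := rfl
@[simp] lemma qk_imJ : qk.imJ = 0 := rfl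
@[simp] lemma qk_imK : qk.imK = 1 := rfl

lemma toMatrix_entries (f : ℍ[ℝ] →ₗ[ℝ] ℍ[ℝ]) :
    LinearMap.toMatrix B B f =
      ![![(f 1).re, (f qi).re, (f qj).re, (f qk).re],
        ![(f 1).imI, (f qi).imI, (f qj).imI, (f qk).imI],
        ![(f 1).imJ, (f qi).imJ, (f qj).imJ, (f qk).imJ],
        ![(f 1).imK, (f qi).imK, (f qj).imK, (f qk).imK]] := by
  ext i j
  fin_cases i <;> fin_cases j <;>
    simp [LinearMap.toMatrix_apply, QuaternionAlgebra.coe_basisOneIJK_repr,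
      QuaternionAlgebra.basisOneIJK] <;> rfl

lemma det_mulLeft (x : ℍ[ℝ]) :
    LinearMap.det (LinearMap.mulLeft ℝ x) = (normSq x) ^ 2 := by
  refine (LinearMap.det_toMatrix B _).symm.trans ?_
  refine ((congrArg Matrix.det (toMatrix_entries _)).trans (det_fin_four _)).trans ?_
  rw [normSq_def']
  simp only [LinearMap.mulLeft_apply, Quaternion.re_mul, Quaternion.imI_mul, Quaternion.imJ_mul, Quaternion.imK_mul]
  simp
  ring

lemma det_mulRight (x : ℍ[ℝ]) :
    LinearMap.det (LinearMap.mulRight ℝ x) = (normSq x) ^ 2 := by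
  refine (LinearMap.det_toMatrix B _).symm.trans ?_
  refine ((congrArg Matrix.det (toMatrix_entries _)).trans (det_fin_four _)).trans ?_
  rw [normSq_def']
  simp only [LinearMap.mulRight_apply, Quaternion.re_mul, Quaternion.imI_mul, Quaternion.imJ_mul, Quaternion.imK_mul]
  simp
  ring

def qstarL : ℍ[ℝ] →ₗ[ℝ] ℍ[ℝ] where
  toFun := star
  map_add' := star_add
  map_smul' r x := by ext <;> simp

lemma det_qstarL : LinearMap.det qstarL = -1 := by
  refine (LinearMap.det_toMatrix B _).symm.trans ?_
  refine ((congrArg Matrix.det (toMatrix_entries _)).trans (det_fin_four _)).trans ?_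
  simp [qstarL]

open scoped RealInnerProductSpace

lemma normSq_of_unitary {x : ℍ[ℝ]} (hx : x ∈ unitary ℍ[ℝ]) : normSq x = 1 := by
  have h := (Unitary.mem_iff.mp hx).1
  rw [star_mul_self] at h
  simpa using congrArg QuaternionAlgebra.re h

lemma mem_unitary_of_normSq {x : ℍ[ℝ]} (hx : normSq x = 1) : x ∈ unitary ℍ[ℝ] := by
  rw [Unitary.mem_iff, star_mul_self, self_mul_star, hx]
  norm_num

lemma norm_of_unitary {x : ℍ[ℝ]} (hx : x ∈ unitary ℍ[ℝ]) : ‖x‖ = 1 := by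
  have h : ‖x‖ * ‖x‖ = 1 := by rw [← normSq_eq_norm_mul_self, normSq_of_unitary hx]
  nlinarith [norm_nonneg x]

/-- The linear isometric automorphism `z ↦ x z (star y)` for unit quaternions `x, y`. -/
def eta (p : unitary ℍ[ℝ] × unitary ℍ[ℝ]) : ℍ[ℝ] ≃ₗᵢ[ℝ] ℍ[ℝ] where
  toLinearEquiv :=
  { toFun := fun z => (p.1 : ℍ[ℝ]) * z * star (p.2 : ℍ[ℝ])
    invFun := fun z => star (p.1 : ℍ[ℝ]) * z * (p.2 : ℍ[ℝ])
    map_add' := fun a b => by noncomm_ring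
    map_smul' := fun r a => by
      simp only [RingHom.id_apply]
      rw [mul_smul_comm, smul_mul_assoc]
    left_inv := fun z => by
      have h1 : star (p.1 : ℍ[ℝ]) * (p.1 : ℍ[ℝ]) = 1 := (Unitary.mem_iff.mp p.1.2).1
      have h2 : star (p.2 : ℍ[ℝ]) * (p.2 : ℍ[ℝ]) = 1 := (Unitary.mem_iff.mp p.2.2).1
      calc star (p.1:ℍ[ℝ]) * ((p.1:ℍ[ℝ]) * z * star (p.2:ℍ[ℝ])) * (p.2:ℍ[ℝ])
          = (star (p.1:ℍ[ℝ]) * (p.1:ℍ[ℝ])) * z * (star (p.2:ℍ[ℝ]) * (p.2:ℍ[ℝ])) := by noncomm_ring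
        _ = z := by rw [h1, h2]; noncomm_ring
    right_inv := fun z => by
      have h1 : (p.1 : ℍ[ℝ]) * star (p.1 : ℍ[ℝ]) = 1 := (Unitary.mem_iff.mp p.1.2).2
      have h2 : (p.2 : ℍ[ℝ]) * star (p.2 : ℍ[ℝ]) = 1 := (Unitary.mem_iff.mp p.2.2).2
      calc (p.1:ℍ[ℝ]) * (star (p.1:ℍ[ℝ]) * z * (p.2:ℍ[ℝ])) * star (p.2:ℍ[ℝ])
          = ((p.1:ℍ[ℝ]) * star (p.1:ℍ[ℝ])) * z * ((p.2:ℍ[ℝ]) * star (p.2:ℍ[ℝ])) := by noncomm_ring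
        _ = z := by rw [h1, h2]; noncomm_ring }
  norm_map' := fun z => by
    simp only [LinearEquiv.coe_mk]
    change ‖(p.1 : ℍ[ℝ]) * z * star (p.2 : ℍ[ℝ])‖ = ‖z‖
    rw [norm_mul, norm_mul, norm_of_unitary p.1.2, Quaternion.norm_star,
      norm_of_unitary p.2.2, one_mul, mul_one]

lemma eta_apply (p : unitary ℍ[ℝ] × unitary ℍ[ℝ]) (z : ℍ[ℝ]) :
    eta p z = (p.1 : ℍ[ℝ]) * z * star (p.2 : ℍ[ℝ]) := rfl

/-- `eta` as a group homomorphism. -/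
def etaHom : (unitary ℍ[ℝ] × unitary ℍ[ℝ]) →* (ℍ[ℝ] ≃ₗᵢ[ℝ] ℍ[ℝ]) where
  toFun := eta
  map_one' := by
    refine LinearIsometryEquiv.ext fun z => ?_
    simp [eta_apply]
  map_mul' p q := by
    refine LinearIsometryEquiv.ext fun z => ?_
    simp only [eta_apply, LinearIsometryEquiv.coe_mul, Function.comp_apply,
      Prod.fst_mul, Prod.snd_mul, Submonoid.coe_mul, star_mul]
    noncomm_ring

example : True := trivial

lemma negOne_mem_unitary' : ((-1 : ℍ[ℝ]) ∈ unitary ℍ[ℝ]) := by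
  rw [Unitary.mem_iff]; constructor <;> simp

lemma eta_eq_one_iff (p : unitary ℍ[ℝ] × unitary ℍ[ℝ]) :
    etaHom p = 1 ↔ p = (1, 1) ∨ p = (⟨-1, negOne_mem_unitary'⟩, ⟨-1, negOne_mem_unitary'⟩) := by
  constructor
  · intro h
    have H : ∀ z : ℍ[ℝ], (p.1 : ℍ[ℝ]) * z * star (p.2 : ℍ[ℝ]) = z := fun z => by
      have := DFunLike.congr_fun h z
      simpa [eta_apply, etaHom] using this
    have h2 : star (p.2 : ℍ[ℝ]) * (p.2 : ℍ[ℝ]) = 1 := (Unitary.mem_iff.mp p.2.2).1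
    have h1 : star (p.1 : ℍ[ℝ]) * (p.1 : ℍ[ℝ]) = 1 := (Unitary.mem_iff.mp p.1.2).1
    have hp12 : (p.1 : ℍ[ℝ]) = (p.2 : ℍ[ℝ]) := by
      have := H 1
      rw [mul_one] at this
      calc (p.1 : ℍ[ℝ]) = ((p.1 : ℍ[ℝ]) * star (p.2 : ℍ[ℝ])) * (p.2 : ℍ[ℝ]) := by
            rw [mul_assoc, h2, mul_one]
        _ = (p.2 : ℍ[ℝ]) := by rw [this, one_mul]
    set q : ℍ[ℝ] := (p.1 : ℍ[ℝ]) with hq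
    have hcomm : ∀ z : ℍ[ℝ], q * z = z * q := fun z => by
      have := H z
      rw [← hp12] at this
      calc q * z = (q * z * star q) * q := by
            rw [mul_assoc, h1, mul_one]
        _ = z * q := by rw [this]
    have hi := hcomm qi
    have hj := hcomm qj
    rw [Quaternion.ext_iff] at hi hj
    simp only [Quaternion.re_mul, Quaternion.imI_mul, Quaternion.imJ_mul, Quaternion.imK_mul] at hi hj
    simp at hi hj
    have hK : q.imK = 0 := by linarith [hi.1]
    have hJ : q.imJ = 0 := by linarith [hi.2]
    have hI : q.imI = 0 := by linarith [hj.2]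
    have hns : normSq q = 1 := normSq_of_unitary p.1.2
    rw [normSq_def', hI, hJ, hK] at hns
    have hre : q.re = 1 ∨ q.re = -1 := mul_self_eq_one_iff.mp (by nlinarith)
    rcases hre with h' | h'
    · left
      have hq1 : q = 1 := by
        ext <;> simp [h', hI, hJ, hK]
      rw [Prod.ext_iff]
      exact ⟨Subtype.ext (show (p.1 : ℍ[ℝ]) = 1 by rw [← hq, hq1]),
        Subtype.ext (show (p.2 : ℍ[ℝ]) = 1 by rw [← hp12, hq1])⟩
    · right
      have hq1 : q = -1 := by
        ext <;> simp [h', hI, hJ, hK]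
      rw [Prod.ext_iff]
      exact ⟨Subtype.ext (show (p.1 : ℍ[ℝ]) = -1 by rw [← hq, hq1]),
        Subtype.ext (show (p.2 : ℍ[ℝ]) = -1 by rw [← hp12, hq1])⟩
  · rintro (rfl | rfl) <;>
      · refine LinearIsometryEquiv.ext fun z => ?_
        simp [etaHom, eta_apply]

lemma det_eta (p : unitary ℍ[ℝ] × unitary ℍ[ℝ]) :
    LinearMap.det ((eta p).toLinearEquiv : ℍ[ℝ] →ₗ[ℝ] ℍ[ℝ]) = 1 := by
  have hcomp : ((eta p).toLinearEquiv : ℍ[ℝ] →ₗ[ℝ] ℍ[ℝ]) =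
      (LinearMap.mulLeft ℝ (p.1 : ℍ[ℝ])).comp
        (LinearMap.mulRight ℝ (star (p.2 : ℍ[ℝ]))) := by
    refine LinearMap.ext fun z => ?_
    show (p.1 : ℍ[ℝ]) * z * star (p.2 : ℍ[ℝ]) = _
    simp only [LinearMap.coe_comp, Function.comp_apply, LinearMap.mulLeft_apply,
      LinearMap.mulRight_apply, mul_assoc]
  rw [hcomp, LinearMap.det_comp, det_mulLeft, det_mulRight, normSq_star,
    normSq_of_unitary p.1.2, normSq_of_unitary p.2.2]
  norm_num

lemma star_mul_self_one {a : ℍ[ℝ]} (ha : normSq a = 1) : star a * a = 1 := by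
  rw [star_mul_self, ha]; norm_num

lemma self_mul_star_one {a : ℍ[ℝ]} (ha : normSq a = 1) : a * star a = 1 := by
  rw [self_mul_star, ha]; norm_num

lemma conj_of_orthogonal {a w : ℍ[ℝ]} (ha : normSq a = 1) (hw : ⟪a, w⟫ = 0) :
    a * star w * a = -w := by
  have h0 : (a * star w).re = 0 := hw
  have hs : star (a * star w) = -(a * star w) := Quaternion.star_eq_neg.mpr h0
  have hkey : a * star w = -(w * star a) := by
    have : w * star a = -(a * star w) := by simpa using hs
    rw [this, neg_neg]
  rw [hkey, neg_mul, mul_assoc, star_mul_self_one ha, mul_one]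

lemma reflection_eq_quat (a : ℍ[ℝ]) (ha : normSq a = 1) (z : ℍ[ℝ]) :
    Submodule.reflection ((ℝ ∙ a)ᗮ) z = -(a * star z * a) := by
  set c : ℝ := ⟪a, z⟫ with hc
  set w : ℍ[ℝ] := z - c • a with hwdef
  have haa : ⟪a, a⟫ = 1 := by rw [Quaternion.inner_self, ha]
  have hw : ⟪a, w⟫ = 0 := by
    rw [hwdef, inner_sub_right, real_inner_smul_right, haa, mul_one, hc, sub_self]
  have hz : z = c • a + w := by rw [hwdef]; abel
  have hwmem : w ∈ (ℝ ∙ a)ᗮ := by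
    rw [Submodule.mem_orthogonal_singleton_iff_inner_right]
    exact hw
  have hrefl : Submodule.reflection ((ℝ ∙ a)ᗮ) z = -(c • a) + w := by
    rw [hz, map_add, map_smul,
      Submodule.reflection_mem_subspace_orthogonal_precomplement_eq_neg
        (Submodule.mem_span_singleton_self a),
      Submodule.reflection_mem_subspace_eq_self hwmem, smul_neg]
  rw [hrefl, hz]
  have h1 : a * star (c • a) * a = c • a := by
    rw [Quaternion.star_smul, mul_smul_comm, smul_mul_assoc]
    congr 1
    rw [self_mul_star_one ha, one_mul]
  rw [star_add, mul_add, add_mul, h1, conj_of_orthogonal ha hw]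
  abel

lemma pair_reflection_mem (a b : ℍ[ℝ]) (ha : normSq a = 1) (hb : normSq b = 1) :
    Submodule.reflection ((ℝ ∙ a)ᗮ) * Submodule.reflection ((ℝ ∙ b)ᗮ) ∈ MonoidHom.range etaHom := by
  refine ⟨(⟨a * star b, mem_unitary_of_normSq (by simp [normSq.map_mul, normSq_star, ha, hb])⟩,
          ⟨star a * b, mem_unitary_of_normSq (by simp [normSq.map_mul, normSq_star, ha, hb])⟩), ?_⟩
  refine LinearIsometryEquiv.ext fun z => ?_
  show eta _ z = _
  rw [eta_apply]
  have : (Submodule.reflection ((ℝ ∙ a)ᗮ) * Submodule.reflection ((ℝ ∙ b)ᗮ)) z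
      = Submodule.reflection ((ℝ ∙ a)ᗮ) (Submodule.reflection ((ℝ ∙ b)ᗮ) z) := rfl
  rw [this, reflection_eq_quat b hb, reflection_eq_quat a ha]
  simp only [star_neg, star_mul, star_star]
  simp [mul_assoc]

lemma det_reflection_quat (a : ℍ[ℝ]) (ha : normSq a = 1) :
    LinearMap.det (((Submodule.reflection ((ℝ ∙ a)ᗮ)).toLinearEquiv : ℍ[ℝ] ≃ₗ[ℝ] ℍ[ℝ]) : ℍ[ℝ] →ₗ[ℝ] ℍ[ℝ])
      = -1 := by
  have hcomp : (((Submodule.reflection ((ℝ ∙ a)ᗮ)).toLinearEquiv : ℍ[ℝ] ≃ₗ[ℝ] ℍ[ℝ]) : ℍ[ℝ] →ₗ[ℝ] ℍ[ℝ]) =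
      (LinearMap.mulLeft ℝ (-a)).comp ((LinearMap.mulRight ℝ a).comp qstarL) := by
    refine LinearMap.ext fun z => ?_
    show Submodule.reflection ((ℝ ∙ a)ᗮ) z = _
    rw [reflection_eq_quat a ha z]
    show _ = -a * (star z * a)
    rw [neg_mul, mul_assoc]
  rw [hcomp, LinearMap.det_comp, LinearMap.det_comp, det_mulLeft, det_mulRight, det_qstarL,
    normSq_neg, ha]
  norm_num

lemma det_liso_mul (g f : ℍ[ℝ] ≃ₗᵢ[ℝ] ℍ[ℝ]) :
    LinearMap.det (((g * f).toLinearEquiv : ℍ[ℝ] ≃ₗ[ℝ] ℍ[ℝ]) : ℍ[ℝ] →ₗ[ℝ] ℍ[ℝ])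
      = LinearMap.det ((g.toLinearEquiv : ℍ[ℝ] ≃ₗ[ℝ] ℍ[ℝ]) : ℍ[ℝ] →ₗ[ℝ] ℍ[ℝ]) *
        LinearMap.det ((f.toLinearEquiv : ℍ[ℝ] ≃ₗ[ℝ] ℍ[ℝ]) : ℍ[ℝ] →ₗ[ℝ] ℍ[ℝ]) := by
  have : (((g * f).toLinearEquiv : ℍ[ℝ] ≃ₗ[ℝ] ℍ[ℝ]) : ℍ[ℝ] →ₗ[ℝ] ℍ[ℝ]) =
      ((g.toLinearEquiv : ℍ[ℝ] ≃ₗ[ℝ] ℍ[ℝ]) : ℍ[ℝ] →ₗ[ℝ] ℍ[ℝ]).comp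
        ((f.toLinearEquiv : ℍ[ℝ] ≃ₗ[ℝ] ℍ[ℝ]) : ℍ[ℝ] →ₗ[ℝ] ℍ[ℝ]) :=
    rfl
  rw [this, LinearMap.det_comp]

lemma refl_congr {K L : Submodule ℝ ℍ[ℝ]} (h : K = L) :
    (Submodule.reflection Kᗮ : ℍ[ℝ] ≃ₗᵢ[ℝ] ℍ[ℝ]) = Submodule.reflection Lᗮ := by subst h; rfl

lemma prod_reflections_mem (l : List ℍ[ℝ]) :
    ((l.map fun v => Submodule.reflection ((ℝ ∙ v)ᗮ)).prod ∈ MonoidHom.range etaHom) ∨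
      (∃ a : ℍ[ℝ], normSq a = 1 ∧
        Submodule.reflection ((ℝ ∙ a)ᗮ) * (l.map fun v => Submodule.reflection ((ℝ ∙ v)ᗮ)).prod
          ∈ MonoidHom.range etaHom) := by
  induction l with
  | nil =>
    left
    simp only [List.map_nil, List.prod_nil]
    exact one_mem _
  | cons v l ih =>
    rw [List.map_cons, List.prod_cons]
    by_cases hv : v = 0
    · subst hv
      have h0 : Submodule.reflection ((ℝ ∙ (0 : ℍ[ℝ]))ᗮ) = 1 := by
        refine LinearIsometryEquiv.ext fun z => ?_
        have hz : z ∈ (ℝ ∙ (0 : ℍ[ℝ]))ᗮ := by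
          rw [Submodule.mem_orthogonal]
          intro u hu
          rcases Submodule.mem_span_singleton.mp hu with ⟨r, rfl⟩
          simp
        simpa using Submodule.reflection_mem_subspace_eq_self hz
      rw [h0, one_mul]
      exact ih
    · obtain ⟨a, hadef⟩ : ∃ a : ℍ[ℝ], a = ‖v‖⁻¹ • v := ⟨_, rfl⟩
      have hnv : ‖v‖ ≠ 0 := norm_ne_zero_iff.mpr hv
      have hna : ‖a‖ = 1 := by
        rw [hadef, norm_smul, norm_inv, norm_norm, inv_mul_cancel₀ hnv]
      have ha : normSq a = 1 := by
        rw [normSq_eq_norm_mul_self, hna, one_mul]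
      have hspan : (ℝ ∙ v) = ℝ ∙ a := by
        rw [hadef]
        exact (Submodule.span_singleton_smul_eq (IsUnit.mk0 _ (inv_ne_zero hnv)) v).symm
      rcases ih with hmem | ⟨b, hb, hmem⟩
      · right
        refine ⟨a, ha, ?_⟩
        rw [refl_congr hspan, ← mul_assoc, Submodule.reflection_mul_reflection, one_mul]
        exact hmem
      · left
        have hrw : Submodule.reflection ((ℝ ∙ a)ᗮ) * (l.map fun v => Submodule.reflection ((ℝ ∙ v)ᗮ)).prod =
            (Submodule.reflection ((ℝ ∙ a)ᗮ) * Submodule.reflection ((ℝ ∙ b)ᗮ)) *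
              (Submodule.reflection ((ℝ ∙ b)ᗮ) * (l.map fun v => Submodule.reflection ((ℝ ∙ v)ᗮ)).prod) := by
          rw [mul_assoc, ← mul_assoc (Submodule.reflection ((ℝ ∙ b)ᗮ)), Submodule.reflection_mul_reflection, one_mul]
        rw [refl_congr hspan, hrw]
        exact mul_mem (pair_reflection_mem a b ha hb) hmem

lemma mem_range_of_det (f : ℍ[ℝ] ≃ₗᵢ[ℝ] ℍ[ℝ])
    (hf : LinearMap.det ((f.toLinearEquiv : ℍ[ℝ] ≃ₗ[ℝ] ℍ[ℝ]) : ℍ[ℝ] →ₗ[ℝ] ℍ[ℝ]) = 1) :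
    f ∈ MonoidHom.range etaHom := by
  obtain ⟨l, -, hfl⟩ := f.reflections_generate_dim
  rcases prod_reflections_mem l with h | ⟨a, ha, hmem⟩
  · rwa [hfl]
  · exfalso
    obtain ⟨p, hp⟩ := hmem
    have hdet := congrArg
      (fun g : ℍ[ℝ] ≃ₗᵢ[ℝ] ℍ[ℝ] =>
        LinearMap.det ((g.toLinearEquiv : ℍ[ℝ] ≃ₗ[ℝ] ℍ[ℝ]) : ℍ[ℝ] →ₗ[ℝ] ℍ[ℝ])) hp
    rw [← hfl] at hdet
    rw [det_liso_mul, det_reflection_quat a ha, hf] at hdet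
    have : (eta p).toLinearEquiv = (etaHom p).toLinearEquiv := rfl
    rw [show (etaHom p : ℍ[ℝ] ≃ₗᵢ[ℝ] ℍ[ℝ]) = eta p from rfl] at hdet
    rw [det_eta p] at hdet
    norm_num at hdet

/-- For every pair `(x, y)` of unit quaternions, `z ↦ x * z * conj y` is a linear isometric
automorphism of `ℍ` (a 4-dimensional real inner product space); the resulting map `η₀` from
`Sp(1) × Sp(1)` to the linear isometric automorphisms of `ℍ` is a group homomorphism with
kernel exactly `{(1,1), (−1,−1)}` and range exactly the isometries of determinant `1`;
consequently it induces a group isomorphism from `(Sp(1) × Sp(1))/{±(1,1)}` onto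
`SO(ℍ) ≅ SO(4)`. -/
theorem eta0_spin4_so4 :
    ∃ η₀ : (unitary ℍ[ℝ] × unitary ℍ[ℝ]) →* (ℍ[ℝ] ≃ₗᵢ[ℝ] ℍ[ℝ]),
      (∀ (p : unitary ℍ[ℝ] × unitary ℍ[ℝ]) (z : ℍ[ℝ]),
        η₀ p z = (p.1 : ℍ[ℝ]) * z * star (p.2 : ℍ[ℝ])) ∧
      ((MonoidHom.ker η₀ : Subgroup (unitary ℍ[ℝ] × unitary ℍ[ℝ]))
          : Set (unitary ℍ[ℝ] × unitary ℍ[ℝ]))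
        = {(1, 1), (⟨-1, negOne_negOne_mem_unitary⟩, ⟨-1, negOne_negOne_mem_unitary⟩)} ∧
      (Set.range η₀
        = {f : ℍ[ℝ] ≃ₗᵢ[ℝ] ℍ[ℝ] |
            LinearMap.det (f.toLinearEquiv : ℍ[ℝ] →ₗ[ℝ] ℍ[ℝ]) = 1}) ∧
      Nonempty (((unitary ℍ[ℝ] × unitary ℍ[ℝ]) ⧸ MonoidHom.ker η₀) ≃* MonoidHom.range η₀) := by
  refine ⟨etaHom, fun p z => rfl, ?_, ?_, ⟨QuotientGroup.quotientKerEquivRange etaHom⟩⟩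
  · ext p
    simp only [SetLike.mem_coe, MonoidHom.mem_ker, Set.mem_insert_iff, Set.mem_singleton_iff]
    exact eta_eq_one_iff p
  · ext f
    simp only [Set.mem_range, Set.mem_setOf_eq]
    constructor
    · rintro ⟨p, rfl⟩
      exact det_eta p
    · intro hf
      obtain ⟨p, hp⟩ := mem_range_of_det f hf
      exact ⟨p, hp⟩

end
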